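/- Let S be a comonad preserving finite limits on a finitely complete category B, and let y be an S-coalgebra. Then the forgetful functor L induces a comonadic, limit-creating functor L/y : S-CoAlg/y → B/L(y) between slice categories, and consequently L reflects exponentiable morphisms: a morphism of S-coalgebras is exponentiable in S-CoAlg whenever its underlying morphism is exponentiable in B. -/

import Mathlib

open CategoryTheory CategoryTheory.Limits


noncomputable section OverPostAux

namespace OverPostAux

universe v₁ v₂ u₁ u₂

variable {C : Type u₁} [Category.{v₁} C] {D : Type u₂} [Category.{v₂} D]

section Adj

variable [HasPullbacks C] {F : C ⥤ D} {G : D ⥤ C} (adj : F ⊣ G) (X : C)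

/-- The right adjoint to `Over.post F` induced by an adjunction `F ⊣ G`. -/
def postAdjunction :
    Over.post F (X := X) ⊣ Over.post G (X := F.obj X) ⋙ Over.pullback (adj.unit.app X) :=
  Over.postAdjunctionLeft adj

end Adj

section Preserves

variable (F : C ⥤ D) (X : C)

/-- `Over.forget` intertwines `Over.post F` and `F`. -/
def postForgetIso : Over.forget X ⋙ F ≅ Over.post F (X := X) ⋙ Over.forget (F.obj X) :=
  NatIso.ofComponents (fun _ => Iso.refl _)
    (fun _ => (Category.comp_id _).trans (Category.id_comp _).symm)

lemma postPreservesConnected (J : Type*) [Category J] [IsConnected J]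
    [HasLimitsOfShape J C] [PreservesLimitsOfShape J F] :
    PreservesLimitsOfShape J (Over.post F (X := X)) := by
  haveI : PreservesLimitsOfShape J (Over.forget X) :=
    preservesLimitOfShape_of_createsLimitsOfShape_and_hasLimitsOfShape _
  haveI : PreservesLimitsOfShape J (Over.post F (X := X) ⋙ Over.forget (F.obj X)) :=
    preservesLimitsOfShape_of_natIso (postForgetIso F X)
  exact preservesLimitsOfShape_of_reflects_of_preserves _ (Over.forget (F.obj X))

instance postReflectsIsomorphisms [F.ReflectsIsomorphisms] :
    (Over.post F (X := X)).ReflectsIsomorphisms where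
  reflects f hf := by
    haveI := hf
    have h1 : IsIso ((Over.forget (F.obj X)).map ((Over.post F (X := X)).map f)) :=
      inferInstance
    haveI h2 : IsIso (F.map f.left) := h1
    haveI h3 : IsIso f.left := isIso_of_reflects_iso f.left F
    haveI h4 : IsIso ((Over.forget X).map f) := h3
    exact isIso_of_reflects_iso f (Over.forget X)

variable [HasFiniteLimits C] [HasFiniteLimits D] [PreservesFiniteLimits F]

/-- `Over.post F` sends the terminal object to a terminal object. -/
def postTerminalIso : (Over.post F (X := X)).obj (⊤_ (Over X)) ≅ ⊤_ (Over (F.obj X)) :=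
  (Over.post F (X := X)).mapIso (terminalIsTerminal.uniqueUpToIso (Over.mkIdTerminal (X := X))) ≪≫
    (Over.isoMk (Iso.refl _) (by exact (Category.id_comp _).trans (F.map_id X).symm) :
      (Over.post F (X := X)).obj (Over.mk (𝟙 X)) ≅ Over.mk (𝟙 (F.obj X))) ≪≫
      (Over.mkIdTerminal (X := F.obj X)).uniqueUpToIso terminalIsTerminal

lemma postPreservesFiniteLimits : PreservesFiniteLimits (Over.post F (X := X)) := by
  haveI : PreservesLimitsOfShape WalkingCospan (Over.post F (X := X)) :=
    postPreservesConnected F X WalkingCospan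
  haveI : PreservesLimit (Functor.empty.{0} (Over X)) (Over.post F (X := X)) :=
    preservesTerminal_of_iso _ (postTerminalIso F X)
  haveI : PreservesLimitsOfShape (Discrete.{0} PEmpty) (Over.post F (X := X)) :=
    preservesLimitsOfShape_pempty_of_preservesTerminal _
  exact preservesFiniteLimits_of_preservesTerminal_and_pullbacks _

end Preserves

end OverPostAux

/-- An object is exponentiable if it is closed (old Mathlib `CategoryTheory.Exponentiable`). -/
abbrev Exponentiable {C : Type*} [Category C] [CartesianMonoidalCategory C] (X : C) :=
  Closed X

/-- Let `S` be a comonad preserving finite limits on a finitely complete category `B`, and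
let `y` be an `S`-coalgebra.  Then the forgetful functor induces a comonadic,
finite-limit-creating functor between the slice categories
`S-CoAlg / y ⥤ B / (forget S).obj y`, and consequently the forgetful functor reflects
exponentiable morphisms: a morphism of coalgebras is exponentiable whenever its underlying
morphism is exponentiable in `B`. -/
theorem comonad_forget_slice_comonadic_and_reflects_exponentiable_morphisms
    {B : Type*} [Category B] [HasFiniteLimits B] (S : Comonad B)
    [PreservesFiniteLimits (S : B ⥤ B)] (y : Comonad.Coalgebra S)
    [CartesianMonoidalCategory (Over ((Comonad.forget S).obj y))]
    [CartesianMonoidalCategory (Over y)] :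
    Nonempty (ComonadicLeftAdjoint (Over.post (Comonad.forget S) (X := y))) ∧
    (∀ (J : Type) [SmallCategory J] [FinCategory J],
      Nonempty (CreatesLimitsOfShape J (Over.post (Comonad.forget S) (X := y)))) ∧
    (∀ (x : Comonad.Coalgebra S) (fm : x ⟶ y),
      Exponentiable (Over.mk ((Comonad.forget S).map fm)) →
        Nonempty (Exponentiable (Over.mk fm))) := by
  -- notation
  set P := Over.post (Comonad.forget S) (X := y) with hP
  -- finite limits in the category of coalgebras
  haveI hfl : HasFiniteLimits (Comonad.Coalgebra S) := ⟨fun J _ _ => by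
    haveI : PreservesLimitsOfShape J (S : B ⥤ B) :=
      PreservesFiniteLimits.preservesFiniteLimits J
    exact ⟨fun D => Comonad.forget_creates_limits_of_comonad_preserves D⟩⟩
  -- the forgetful functor preserves finite limits
  haveI : PreservesFiniteLimits (Comonad.forget S) := ⟨fun J _ _ => by
    haveI : PreservesLimitsOfShape J (S : B ⥤ B) :=
      PreservesFiniteLimits.preservesFiniteLimits J
    exact preservesLimitOfShape_of_createsLimitsOfShape_and_hasLimitsOfShape _⟩
  haveI : PreservesFiniteLimits P := OverPostAux.postPreservesFiniteLimits (Comonad.forget S) y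
  haveI : HasCoreflexiveEqualizers (Over y) := inferInstance
  haveI : Comonad.PreservesLimitOfIsCoreflexivePair P := ⟨fun A' B' f g _ => by
    haveI : PreservesLimitsOfShape WalkingParallelPair P :=
      PreservesFiniteLimits.preservesFiniteLimits _
    infer_instance⟩
  have cma : ComonadicLeftAdjoint P :=
    Comonad.comonadicOfHasPreservesCoreflexiveEqualizersOfReflectsIsomorphisms
      (OverPostAux.postAdjunction (Comonad.adj S) y)
  refine ⟨⟨cma⟩, fun J _ _ => ?_, fun x fm hexp => ?_⟩
  · haveI := cma
    haveI : PreservesLimitsOfShape J P := PreservesFiniteLimits.preservesFiniteLimits J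
    exact ⟨comonadicCreatesLimitsOfShapeOfPreservesLimitsOfShape P⟩
  · haveI := cma
    haveI : ∀ b, PreservesLimit (pair (Over.mk fm) b) P := fun b => by
      haveI : PreservesLimitsOfShape (Discrete WalkingPair) P :=
        PreservesFiniteLimits.preservesFiniteLimits _
      infer_instance
    haveI h1 : (MonoidalCategory.tensorLeft (P.obj (Over.mk fm))).IsLeftAdjoint :=
      ⟨_, ⟨hexp.adj⟩⟩
    haveI h2 : (P ⋙ MonoidalCategory.tensorLeft (P.obj (Over.mk fm))).IsLeftAdjoint :=
      inferInstance
    haveI h3 : (MonoidalCategory.tensorLeft (Over.mk fm) ⋙ P).IsLeftAdjoint :=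
      ((Adjunction.ofIsLeftAdjoint
        (P ⋙ MonoidalCategory.tensorLeft (P.obj (Over.mk fm)))).ofNatIsoLeft
        (CartesianMonoidalCategory.prodComparisonNatIso P (Over.mk fm)).symm).isLeftAdjoint
    haveI h4 : (MonoidalCategory.tensorLeft (Over.mk fm)).IsLeftAdjoint :=
      isLeftAdjoint_triangle_lift_comonadic P
    exact ⟨Closed.mk _
      (Adjunction.ofIsLeftAdjoint (MonoidalCategory.tensorLeft (Over.mk fm)))⟩
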